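/- The Gaussian does not tile ℝ with any set of translates: there is no countable set Λ ⊆ ℝ and no constant ℓ > 0 such that ∑_{λ ∈ Λ} e^{−(x−λ)²} = ℓ for every x ∈ ℝ (with the sum understood as an absolutely convergent sum over Λ). -/

import Mathlib

open Real MeasureTheory Filter Set Topology

lemma gauss_int (b : ℝ) : ∫ x : ℝ, Real.exp (-(b * x^2)) = Real.sqrt (π / b) := by
  simpa [neg_mul] using integral_gaussian b

lemma gauss_integrable {b : ℝ} (hb : 0 < b) : Integrable (fun x : ℝ => Real.exp (-(b * x^2))) := by
  simpa [neg_mul] using integrable_exp_neg_mul_sq hb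

lemma complete_sq (t a b x : ℝ) (ht : 0 < t) :
    -(t * (x - a)^2) + -((x - b)^2)
      = -((t+1) * (x - (t*a+b)/(t+1))^2) + -((t/(t+1)) * (a-b)^2) := by
  have h1 : t + 1 ≠ 0 := by nlinarith
  field_simp
  ring

lemma step_scaled {ι : Type*} [Countable ι] (lam : ι → ℝ) (ℓ : ℝ) (hℓ : 0 < ℓ)
    (H : ∀ x : ℝ, HasSum (fun i => Real.exp (-(x - lam i)^2)) ℓ)
    (a : ℝ) {s : ℝ} (hs0 : 0 < s) (hs1 : s < 1) :
    HasSum (fun i => Real.exp (-(s * (a - lam i)^2))) (ℓ / Real.sqrt s) := by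
  set t : ℝ := s / (1 - s) with ht_def
  have h1s : 0 < 1 - s := by linarith
  have ht : 0 < t := div_pos hs0 h1s
  have ht1 : 0 < t + 1 := by linarith
  have hts : t / (t + 1) = s := by
    field_simp [ht_def]
    rw [ht_def]; linear_combination (div_mul_cancel₀ s h1s.ne')
  -- per-index integrand
  set g : ι → ℝ → ℝ := fun i x => Real.exp (-(t*(x-a)^2)) * Real.exp (-((x - lam i)^2)) with hg_def
  set m : ι → ℝ := fun i => (t*a + lam i)/(t+1) with hm_def
  have hg_eq : ∀ i x, g i x
      = Real.exp (-((t+1) * (x - m i)^2)) * Real.exp (-(s * (a - lam i)^2)) := by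
    intro i x
    simp only [hg_def, ← Real.exp_add]
    rw [complete_sq t a (lam i) x ht, hts]
  have hg_nonneg : ∀ i x, 0 ≤ g i x := fun i x => by positivity
  have hg_cont : ∀ i, Continuous (g i) := by
    intro i; rw [hg_def]; fun_prop
  have hg_integrable : ∀ i, Integrable (g i) := by
    intro i
    have : Integrable (fun x : ℝ => Real.exp (-((t+1) * (x - m i)^2)) * Real.exp (-(s * (a - lam i)^2))) :=
      (((gauss_integrable ht1).comp_sub_right (m i)).mul_const _)
    exact this.congr (Eventually.of_forall fun x => (hg_eq i x).symm)
  have hg_int : ∀ i, ∫ x, g i x = Real.sqrt (π / (t+1)) * Real.exp (-(s * (a - lam i)^2)) := by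
    intro i
    calc ∫ x, g i x
        = ∫ x, Real.exp (-((t+1) * (x - m i)^2)) * Real.exp (-(s * (a - lam i)^2)) := by
          exact integral_congr_ae (Eventually.of_forall fun x => hg_eq i x)
      _ = (∫ x, Real.exp (-((t+1) * (x - m i)^2))) * Real.exp (-(s * (a - lam i)^2)) := by
          rw [integral_mul_const]
      _ = Real.sqrt (π / (t+1)) * Real.exp (-(s * (a - lam i)^2)) := by
          rw [MeasureTheory.integral_sub_right_eq_self
            (fun y : ℝ => Real.exp (-((t+1) * y^2))) (m i), gauss_int]
  -- lintegral computation (Tonelli)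
  set A : ι → ℝ := fun i => Real.sqrt (π / (t+1)) * Real.exp (-(s * (a - lam i)^2)) with hA_def
  have hA_nonneg : ∀ i, 0 ≤ A i := fun i => by positivity
  set B : ℝ := ℓ * Real.sqrt (π / t) with hB_def
  have hB_nonneg : 0 ≤ B := by positivity
  have key : ∑' i, ENNReal.ofReal (A i) = ENNReal.ofReal B := by
    have h1 : ∀ i, ENNReal.ofReal (A i) = ∫⁻ x, ENNReal.ofReal (g i x) := by
      intro i
      simp only [hA_def]
      rw [← hg_int i]
      exact ofReal_integral_eq_lintegral_ofReal (hg_integrable i)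
        (Eventually.of_forall fun x => hg_nonneg i x)
    calc ∑' i, ENNReal.ofReal (A i) = ∑' i, ∫⁻ x, ENNReal.ofReal (g i x) := by
          exact tsum_congr h1
      _ = ∫⁻ x, ∑' i, ENNReal.ofReal (g i x) := by
          refine (lintegral_tsum fun i => ?_).symm
          exact (ENNReal.measurable_ofReal.comp (hg_cont i).measurable).aemeasurable
      _ = ∫⁻ x, ENNReal.ofReal (Real.exp (-(t*(x-a)^2)) * ℓ) := by
          refine lintegral_congr fun x => ?_
          have hx : HasSum (fun i => g i x) (Real.exp (-(t*(x-a)^2)) * ℓ) := (H x).mul_left _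
          rw [← ENNReal.ofReal_tsum_of_nonneg (fun i => hg_nonneg i x) hx.summable, hx.tsum_eq]
      _ = ENNReal.ofReal B := by
          have hint : Integrable (fun x : ℝ => Real.exp (-(t*(x-a)^2)) * ℓ) :=
            ((gauss_integrable ht).comp_sub_right a).mul_const _
          rw [← ofReal_integral_eq_lintegral_ofReal hint
            (Eventually.of_forall fun x => by positivity)]
          congr 1
          rw [integral_mul_const,
            MeasureTheory.integral_sub_right_eq_self (fun y : ℝ => Real.exp (-(t*y^2))) a,
            gauss_int, hB_def, mul_comm]
  -- back to real summability
  have hfin : ∑' i, ENNReal.ofReal (A i) ≠ ⊤ := by rw [key]; exact ENNReal.ofReal_ne_top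
  have hsummA : Summable A := by
    have := ENNReal.summable_toReal hfin
    refine this.congr fun i => ?_
    rw [ENNReal.toReal_ofReal (hA_nonneg i)]
  have htsumA : ∑' i, A i = B := by
    have h2 : (∑' i, ENNReal.ofReal (A i)).toReal = ∑' i, (ENNReal.ofReal (A i)).toReal :=
      ENNReal.tsum_toReal_eq fun i => ENNReal.ofReal_ne_top
    rw [key, ENNReal.toReal_ofReal hB_nonneg] at h2
    rw [h2]
    exact tsum_congr fun i => (ENNReal.toReal_ofReal (hA_nonneg i)).symm
  -- divide by the constant
  set K : ℝ := Real.sqrt (π / (t+1)) with hK_def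
  have hK : 0 < K := Real.sqrt_pos.mpr (by positivity)
  have hsumme : Summable (fun i => Real.exp (-(s * (a - lam i)^2))) := by
    have := hsummA.mul_left K⁻¹
    refine this.congr fun i => ?_
    rw [hA_def]
    field_simp
  have htsume : ∑' i, Real.exp (-(s * (a - lam i)^2)) = ℓ / Real.sqrt s := by
    have h3 : ∑' i, K * Real.exp (-(s * (a - lam i)^2)) = B := htsumA
    rw [tsum_mul_left] at h3
    have hs' : Real.sqrt s > 0 := Real.sqrt_pos.mpr hs0
    have hprod : Real.sqrt (π / t) * Real.sqrt s = K := by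
      rw [hK_def, ← Real.sqrt_mul (by positivity)]
      congr 1
      rw [← hts]
      field_simp
    have hsum_val : ∑' i, Real.exp (-(s * (a - lam i)^2)) = B / K := by
      field_simp at h3 ⊢
      linarith [h3]
    rw [hsum_val, hB_def, ← hprod]
    rw [eq_div_iff (by positivity)]
    field_simp
  rw [← htsume]
  exact hsumme.hasSum

/-- The Gaussian `e^{-x²}` does not tile `ℝ` with any countable set of
translates at any positive constant level. -/
theorem stmt_9 :
    ¬ ∃ (Λ : Set ℝ), Λ.Countable ∧ ∃ ℓ : ℝ, 0 < ℓ ∧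
      ∀ x : ℝ, HasSum (fun l : Λ => Real.exp (-(x - (l : ℝ)) ^ 2)) ℓ := by
  rintro ⟨Λ, hcount, ℓ, hℓ, H⟩
  haveI := hcount.to_subtype
  -- Λ is nonempty
  have hne : Nonempty Λ := by
    by_contra h
    haveI : IsEmpty Λ := not_nonempty_iff.mp h
    exact hℓ.ne' ((H 0).unique hasSum_empty)
  obtain ⟨l₀⟩ := hne
  set c : Λ → ℝ := fun l => (l₀ : ℝ) - (l : ℝ) with hc_def
  have Hs : ∀ {s : ℝ}, 0 < s → s < 1 →
      HasSum (fun l : Λ => Real.exp (-(s * (c l)^2))) (ℓ / Real.sqrt s) := by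
    intro s hs0 hs1
    exact step_scaled (fun l : Λ => (l : ℝ)) ℓ hℓ H (l₀ : ℝ) hs0 hs1
  -- the complex function
  set f : Λ → ℂ → ℂ := fun l w => Complex.exp (-(w * ((c l : ℝ) : ℂ)^2)) with hf_def
  set G : ℂ → ℂ := fun w => ∑' l : Λ, f l w with hG_def
  set U : Set ℂ := {w : ℂ | 1/2 < w.re} with hU_def
  have hUopen : IsOpen U := isOpen_lt continuous_const Complex.continuous_re
  have hUconn : IsPreconnected U := (convex_halfSpace_re_gt (1/2)).isPreconnected
  -- summable bound
  set u : Λ → ℝ := fun l => Real.exp (-((1/2 : ℝ) * (c l)^2)) with hu_def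
  have hu_summ : Summable u := (Hs (by norm_num) (by norm_num)).summable
  have hre : ∀ (w : ℂ) (r : ℝ), (-(w * (r:ℂ)^2)).re = -(w.re * r^2) := by
    intro w r
    have h2 : ((r:ℂ))^2 = ((r^2 : ℝ) : ℂ) := by push_cast; ring
    rw [h2, Complex.neg_re, Complex.mul_re, Complex.ofReal_re, Complex.ofReal_im]
    ring
  have hbound : ∀ (l : Λ) (w : ℂ), w ∈ U → ‖f l w‖ ≤ u l := by
    intro l w hw
    rw [hf_def]
    simp only [Complex.norm_exp, hre]
    apply Real.exp_le_exp.mpr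
    apply neg_le_neg
    exact mul_le_mul_of_nonneg_right (le_of_lt hw) (sq_nonneg _)
  -- G is differentiable on U
  have hG_dOn : DifferentiableOn ℂ G U := by
    refine (tendstoUniformlyOn_tsum hu_summ
      fun l w hw => hbound l w hw).tendstoLocallyUniformlyOn.differentiableOn
      (Eventually.of_forall fun N => ?_) hUopen
    refine (Differentiable.fun_sum fun l _ => ?_).differentiableOn
    exact ((differentiable_id.mul (differentiable_const _)).neg).cexp
  -- value of G at real points in (1/2, 1)
  have hGreal : ∀ s : ℝ, G ((s : ℝ) : ℂ) = ((∑' l : Λ, Real.exp (-(s * (c l)^2)) : ℝ) : ℂ) := by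
    intro s
    rw [hG_def, Complex.ofReal_tsum]
    refine tsum_congr fun l => ?_
    simp only [hf_def]
    rw [Complex.ofReal_exp]
    congr 1
    push_cast
    ring
  have hval : ∀ s : ℝ, 1/2 < s → s < 1 → ((s : ℝ) : ℂ) * (G ((s : ℝ) : ℂ))^2 = ((ℓ : ℂ))^2 := by
    intro s h1 h2
    have hs0 : (0:ℝ) < s := by linarith
    have hhs := Hs hs0 h2
    rw [hGreal s, hhs.tsum_eq]
    have hreal : s * (ℓ / Real.sqrt s)^2 = ℓ^2 := by
      rw [div_pow, Real.sq_sqrt hs0.le]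
      field_simp
    norm_cast
  -- identity theorem
  have hΦ : AnalyticOnNhd ℂ (fun w => w * (G w)^2) U :=
    (differentiableOn_id.mul (hG_dOn.pow 2)).analyticOnNhd hUopen
  have hconst : AnalyticOnNhd ℂ (fun _ : ℂ => ((ℓ : ℂ))^2) U := analyticOnNhd_const
  set z₀ : ℂ := ((3/4 : ℝ) : ℂ) with hz₀_def
  have hz₀U : z₀ ∈ U := by
    simp only [hU_def, mem_setOf_eq, hz₀_def, Complex.ofReal_re]
    norm_num
  have hfreq : ∃ᶠ z in nhdsWithin z₀ {z₀}ᶜ, (fun w => w * (G w)^2) z = (fun _ : ℂ => ((ℓ : ℂ))^2) z := by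
    have hr : Tendsto (fun n : ℕ => (3/4 + 1/((n:ℝ)+1))) atTop (nhds (3/4 : ℝ)) := by
      simpa using (tendsto_const_nhds : Tendsto (fun _ : ℕ => (3/4:ℝ)) atTop (𝓝 (3/4))).add tendsto_one_div_add_atTop_nhds_zero_nat
    have hseq : Tendsto (fun n : ℕ => ((3/4 + 1/((n:ℝ)+1) : ℝ) : ℂ)) atTop (nhdsWithin z₀ {z₀}ᶜ) := by
      rw [tendsto_nhdsWithin_iff]
      constructor
      · exact (Complex.continuous_ofReal.tendsto _).comp hr
      · filter_upwards with n
        simp only [mem_compl_iff, mem_singleton_iff, hz₀_def]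
        intro h
        have h' := Complex.ofReal_inj.mp h
        have hpos : (0:ℝ) < 1/((n:ℝ)+1) := by positivity
        linarith
    apply hseq.frequently
    refine ((eventually_ge_atTop 4).mono fun n hn => ?_).frequently
    have hn5 : (5:ℝ) ≤ (n:ℝ) + 1 := by
      have : (4:ℝ) ≤ (n:ℝ) := by exact_mod_cast hn
      linarith
    have h1 : (1:ℝ)/((n:ℝ)+1) ≤ 1/5 := by
      apply one_div_le_one_div_of_le <;> linarith
    have hpos : (0:ℝ) < 1/((n:ℝ)+1) := by positivity
    exact hval _ (by linarith) (by linarith)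
  have heq := hΦ.eqOn_of_preconnected_of_frequently_eq hconst hUconn hz₀U hfreq
  -- final contradiction at s₁ = ℓ² + 1
  set s₁ : ℝ := ℓ^2 + 1 with hs₁_def
  have hs₁half : (1/2 : ℝ) < s₁ := by nlinarith
  have hsumm₁ : Summable (fun l : Λ => Real.exp (-(s₁ * (c l)^2))) := by
    refine Summable.of_nonneg_of_le (fun l => (Real.exp_nonneg _)) (fun l => ?_) hu_summ
    apply Real.exp_le_exp.mpr
    apply neg_le_neg
    apply mul_le_mul_of_nonneg_right (by linarith) (sq_nonneg _)
  set T : ℝ := ∑' l : Λ, Real.exp (-(s₁ * (c l)^2)) with hT_def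
  have hT1 : 1 ≤ T := by
    have h0 : c l₀ = 0 := by simp [hc_def]
    have hle := Summable.le_tsum hsumm₁ l₀ (fun j _ => Real.exp_nonneg _)
    rw [h0] at hle
    rw [hT_def]
    simpa using hle
  have hmem : ((s₁ : ℝ) : ℂ) ∈ U := by
    simp only [hU_def, mem_setOf_eq, Complex.ofReal_re]
    exact hs₁half
  have hfin := heq hmem
  simp only at hfin
  rw [hGreal s₁, ← hT_def] at hfin
  have hreal : s₁ * T^2 = ℓ^2 := by
    have : (((s₁ * T^2 : ℝ)) : ℂ) = ((ℓ^2 : ℝ) : ℂ) := by push_cast; linear_combination hfin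
    exact_mod_cast this
  have hs₁pos : (0:ℝ) < s₁ := by positivity
  have hT2 : (1:ℝ) ≤ T^2 := by nlinarith
  have hmul : s₁ * 1 ≤ s₁ * T^2 := by nlinarith
  rw [hreal] at hmul
  simp only [hs₁_def] at hmul
  linarith
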